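/- Let M be an invertible n×n matrix over F_2 and let N be obtained from M by a single CNOT operation. Then |e(M) − e(N)| ≤ 1, where e(·) denotes the number of connected components of the edge-connectivity graph. -/

import Mathlib

open Matrix

variable {n : ℕ}

/-- Vertex-connectivity graph `G_v(M)`: edge between distinct `i, j` iff `M i j = 1` or `M j i = 1`. -/
def Gv (M : Matrix (Fin n) (Fin n) (ZMod 2)) : SimpleGraph (Fin n) :=
  SimpleGraph.fromRel (fun i j => M i j = 1)

/-- `v(M)`: number of connected components of `G_v(M)`. -/
noncomputable def vcomp (M : Matrix (Fin n) (Fin n) (ZMod 2)) : ℕ :=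
  Nat.card (Gv M).ConnectedComponent

/-- Edge-connectivity graph `G_e(M)`: `inl i` is row `R_i`, `inr j` is column `C_j`;
edge `R_i – C_j` iff `M i j = 1`. -/
def Ge (M : Matrix (Fin n) (Fin n) (ZMod 2)) : SimpleGraph (Fin n ⊕ Fin n) :=
  SimpleGraph.fromRel (fun x y => ∃ i j, x = Sum.inl i ∧ y = Sum.inr j ∧ M i j = 1)

/-- `e(M)`: number of connected components of `G_e(M)`. -/
noncomputable def ecomp (M : Matrix (Fin n) (Fin n) (ZMod 2)) : ℕ :=
  Nat.card (Ge M).ConnectedComponent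

/-- The result of the CNOT operation `CNOT(i,j)`: add row `i` of `M` to row `j` over `F_2`. -/
def cnotStep (M : Matrix (Fin n) (Fin n) (ZMod 2)) (i j : Fin n) :
    Matrix (Fin n) (Fin n) (ZMod 2) :=
  M.updateRow j (M i + M j)

/-- A river of `M`: a permutation `σ` with `M k (σ k) = 1` for all `k`. -/
def IsRiver (M : Matrix (Fin n) (Fin n) (ZMod 2)) (σ : Equiv.Perm (Fin n)) : Prop :=
  ∀ k, M k (σ k) = 1

instance (M : Matrix (Fin n) (Fin n) (ZMod 2)) : DecidablePred (IsRiver M) := fun σ => by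
  unfold IsRiver; exact Fintype.decidableForallFintype

/-- A CNOT gate matrix: `I + E_{j,i}` for `i ≠ j` (left-multiplication adds row `i` to row `j`). -/
def IsCNOT (E : Matrix (Fin n) (Fin n) (ZMod 2)) : Prop :=
  ∃ i j : Fin n, i ≠ j ∧ E = 1 + Matrix.single j i 1

/-- `s(M)`: the minimum number of CNOT gate matrices whose product is `M`. -/
noncomputable def synthSize (M : Matrix (Fin n) (Fin n) (ZMod 2)) : ℕ :=
  sInf {k | ∃ L : List (Matrix (Fin n) (Fin n) (ZMod 2)),
    L.length = k ∧ (∀ E ∈ L, IsCNOT E) ∧ L.prod = M}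

/-- The permutation matrix `P_σ` with `(P_σ)_{i, σ(i)} = 1`. -/
def Pmat (σ : Equiv.Perm (Fin n)) : Matrix (Fin n) (Fin n) (ZMod 2) :=
  Matrix.of fun i j => if σ i = j then 1 else 0


section Aux

open SimpleGraph

variable {V : Type*}


/-- The graph with a single (potential) edge between `u` and `v`. -/
def specGraph (u v : V) : SimpleGraph V :=
  SimpleGraph.fromRel (fun a b => a = u ∧ b = v)

lemma reach_of_adj_reach {G H : SimpleGraph V}
    (h : ∀ x y, G.Adj x y → H.Reachable x y) {x y : V} (hr : G.Reachable x y) :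
    H.Reachable x y := by
  obtain ⟨p⟩ := hr
  induction p with
  | nil => exact Reachable.refl _
  | cons ha p ih => exact (h _ _ ha).trans ih

lemma reach_aux {G : SimpleGraph V} {u v x y : V}
    (h : (G ⊔ specGraph u v).Reachable x y) :
    G.Reachable x y ∨ (G.Reachable x u ∧ G.Reachable v y) ∨
      (G.Reachable x v ∧ G.Reachable u y) := by
  obtain ⟨p⟩ := h
  induction p with
  | nil => exact Or.inl (Reachable.refl _)
  | @cons a b c ha p ih =>
    rcases ha with ha | ha
    · have hab : G.Reachable a b := ha.reachable
      rcases ih with r | ⟨r1, r2⟩ | ⟨r1, r2⟩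
      · exact Or.inl (hab.trans r)
      · exact Or.inr (Or.inl ⟨hab.trans r1, r2⟩)
      · exact Or.inr (Or.inr ⟨hab.trans r1, r2⟩)
    · rw [specGraph, SimpleGraph.fromRel_adj] at ha
      rcases ha with ⟨hne, ⟨rfl, rfl⟩ | ⟨rfl, rfl⟩⟩
      · rcases ih with r | ⟨r1, r2⟩ | ⟨r1, r2⟩
        · exact Or.inr (Or.inl ⟨Reachable.refl _, r⟩)
        · exact Or.inr (Or.inl ⟨Reachable.refl _, r2⟩)
        · exact Or.inl r2
      · rcases ih with r | ⟨r1, r2⟩ | ⟨r1, r2⟩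
        · exact Or.inr (Or.inr ⟨Reachable.refl _, r⟩)
        · exact Or.inl r2
        · exact Or.inr (Or.inr ⟨Reachable.refl _, r2⟩)

lemma card_cc_le [Finite V] {G H : SimpleGraph V}
    (h : ∀ x y, G.Adj x y → H.Reachable x y) :
    Nat.card H.ConnectedComponent ≤ Nat.card G.ConnectedComponent := by
  let f : G.ConnectedComponent → H.ConnectedComponent :=
    ConnectedComponent.lift (fun w => H.connectedComponentMk w)
      (fun a b p _ => ConnectedComponent.sound (reach_of_adj_reach h ⟨p⟩))
  have hs : Function.Surjective f := by
    intro c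
    obtain ⟨w, rfl⟩ := c.exists_rep
    exact ⟨G.connectedComponentMk w, rfl⟩
  exact Nat.card_le_card_of_surjective f hs

lemma card_cc_plus [Finite V] (G : SimpleGraph V) (u v : V) :
    Nat.card G.ConnectedComponent ≤
      Nat.card (G ⊔ specGraph u v).ConnectedComponent + 1 := by
  classical
  set H := G ⊔ specGraph u v with hH
  let φ : G.ConnectedComponent → H.ConnectedComponent :=
    ConnectedComponent.lift (fun w => H.connectedComponentMk w)
      (fun a b p _ => ConnectedComponent.sound (Reachable.mono le_sup_left ⟨p⟩))
  let f : G.ConnectedComponent → Option H.ConnectedComponent :=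
    fun c => if c = G.connectedComponentMk v then none else some (φ c)
  haveI hfin : Finite H.ConnectedComponent := Quot.finite _
  haveI : Fintype H.ConnectedComponent := Fintype.ofFinite _
  have hinj : Function.Injective f := by
    intro c d hcd
    obtain ⟨x, rfl⟩ := c.exists_rep
    obtain ⟨y, rfl⟩ := d.exists_rep
    have hx : Quot.mk G.Reachable x = G.connectedComponentMk x := rfl
    have hy : Quot.mk G.Reachable y = G.connectedComponentMk y := rfl
    rw [hx, hy] at hcd ⊢
    simp only [f] at hcd
    by_cases hc : G.connectedComponentMk x = G.connectedComponentMk v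
    · by_cases hd : G.connectedComponentMk y = G.connectedComponentMk v
      · exact hc.trans hd.symm
      · rw [if_pos hc, if_neg hd] at hcd
        exact absurd hcd (by simp)
    · by_cases hd : G.connectedComponentMk y = G.connectedComponentMk v
      · rw [if_neg hc, if_pos hd] at hcd
        exact absurd hcd (by simp)
      · rw [if_neg hc, if_neg hd] at hcd
        have hφ : H.connectedComponentMk x = H.connectedComponentMk y := by
          simpa [φ] using hcd
        have hreach : H.Reachable x y := (SimpleGraph.ConnectedComponent.eq).mp hφ
        rcases reach_aux hreach with r | ⟨r1, r2⟩ | ⟨r1, r2⟩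
        · exact ConnectedComponent.sound r
        · exact absurd (ConnectedComponent.sound r2.symm) hd
        · exact absurd (ConnectedComponent.sound r1) hc
  calc Nat.card G.ConnectedComponent ≤ Nat.card (Option H.ConnectedComponent) :=
        Nat.card_le_card_of_injective f hinj
    _ = Nat.card H.ConnectedComponent + 1 := Finite.card_option


lemma cnotStep_invol (M : Matrix (Fin n) (Fin n) (ZMod 2)) (i j : Fin n) (hij : i ≠ j) :
    cnotStep (cnotStep M i j) i j = M := by
  have h2 : ∀ x y : ZMod 2, x + (x + y) = y := by decide
  ext a b
  by_cases h : a = j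
  · subst h
    simp [cnotStep, Matrix.updateRow_ne hij, h2]
  · simp [cnotStep, Matrix.updateRow_ne h]

lemma ecomp_le_cnot (M : Matrix (Fin n) (Fin n) (ZMod 2)) (i j : Fin n) (hij : i ≠ j) :
    ecomp M ≤ ecomp (cnotStep M i j) + 1 := by
  classical
  let H : SimpleGraph (Fin n ⊕ Fin n) :=
    Ge M ⊔ specGraph (Sum.inl i) (Sum.inl j)
  have base : ∀ a b, (cnotStep M i j) a b = 1 →
      H.Reachable (Sum.inl a) (Sum.inr b) := by
    intro a b hab
    by_cases ha : a = j
    · rw [ha] at hab ⊢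
      have hsum : M i b + M j b = 1 := by
        simpa [cnotStep] using hab
      have h01 : ∀ x : ZMod 2, x = 0 ∨ x = 1 := by decide
      rcases h01 (M j b) with hj0 | hj1
      · have hi1 : M i b = 1 := by rwa [hj0, add_zero] at hsum
        have e1 : H.Adj (Sum.inl j) (Sum.inl i) := by
          rw [SimpleGraph.sup_adj]
          refine Or.inr ?_
          rw [specGraph, SimpleGraph.fromRel_adj]
          exact ⟨by simpa using hij.symm, Or.inr ⟨rfl, rfl⟩⟩
        have e2 : H.Adj (Sum.inl i) (Sum.inr b) := by
          rw [SimpleGraph.sup_adj]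
          refine Or.inl ?_
          rw [Ge, SimpleGraph.fromRel_adj]
          exact ⟨by simp, Or.inl ⟨i, b, rfl, rfl, hi1⟩⟩
        exact e1.reachable.trans e2.reachable
      · have e : H.Adj (Sum.inl j) (Sum.inr b) := by
          rw [SimpleGraph.sup_adj]
          refine Or.inl ?_
          rw [Ge, SimpleGraph.fromRel_adj]
          exact ⟨by simp, Or.inl ⟨j, b, rfl, rfl, hj1⟩⟩
        exact e.reachable
    · have hMab : M a b = 1 := by
        simpa [cnotStep, Matrix.updateRow_ne ha] using hab
      have e : H.Adj (Sum.inl a) (Sum.inr b) := by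
        rw [SimpleGraph.sup_adj]
        refine Or.inl ?_
        rw [Ge, SimpleGraph.fromRel_adj]
        exact ⟨by simp, Or.inl ⟨a, b, rfl, rfl, hMab⟩⟩
      exact e.reachable
  have key : ∀ x y, (Ge (cnotStep M i j)).Adj x y → H.Reachable x y := by
    intro x y hxy
    rw [Ge, SimpleGraph.fromRel_adj] at hxy
    rcases hxy with ⟨hne, ⟨a, b, rfl, rfl, hab⟩ | ⟨a, b, rfl, rfl, hab⟩⟩
    · exact base a b hab
    · exact (base a b hab).symm
  have h1 : Nat.card H.ConnectedComponent ≤ ecomp (cnotStep M i j) := card_cc_le key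
  have h2 : ecomp M ≤ Nat.card H.ConnectedComponent + 1 :=
    card_cc_plus (Ge M) (Sum.inl i) (Sum.inl j)
  omega

end Aux

/-- A single CNOT operation changes `e(M)` by at most one. -/
theorem stmt2 (n : ℕ) (M : Matrix (Fin n) (Fin n) (ZMod 2)) (hM : IsUnit M)
    (i j : Fin n) (hij : i ≠ j) :
    |(ecomp M : ℤ) - (ecomp (cnotStep M i j) : ℤ)| ≤ 1 := by
  have h1 := ecomp_le_cnot M i j hij
  have h2 := ecomp_le_cnot (cnotStep M i j) i j hij
  rw [cnotStep_invol M i j hij] at h2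
  rw [abs_sub_le_iff]
  constructor <;> push_cast <;> omega
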